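/- Let L be a directed graph in which every vertex has in-degree at most 1 and out-degree at most 1, whose vertices lie in S ∪ V° ∪ T where S, V°, T are disjoint, no edge of L enters S and no edge leaves T. Let L_{ST} be the set of connected components of L that are directed paths starting in S and ending in T, and let L_mid be the components that are paths neither starting in S nor ending in T. Then |L_{ST}| = |E(L)| + |V° \ V(L)| - |V°| + |L_mid|, where V(L) is the set of vertices incident to edges of L. -/

import Mathlib

namespace LinearishArborescence

variable {V : Type*} [DecidableEq V] [Fintype V]

/-- The edge relation of the digraph with edge set `E`. -/
def Rel (E : Finset (V × V)) (u v : V) : Prop := (u, v) ∈ E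

/-- In-degree of a vertex. -/
def inDeg (E : Finset (V × V)) (v : V) : ℕ := (E.filter (fun e => e.2 = v)).card

/-- Out-degree of a vertex. -/
def outDeg (E : Finset (V × V)) (v : V) : ℕ := (E.filter (fun e => e.1 = v)).card

/-- The set of vertices incident to some edge of `E`. -/
def VL (E : Finset (V × V)) : Finset V := E.image Prod.fst ∪ E.image Prod.snd

/-- The number of connected components of `L` that are directed paths starting
in `S` and ending in `T`.  Since no edge of `L` enters `S`, such a component is
determined by its initial vertex, a vertex of `S` from which some vertex of `T`
is reachable. -/
noncomputable def nST (E : Finset (V × V)) (S T : Finset V) : ℕ :=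
  {a : V | a ∈ S ∧ ∃ b ∈ T, Relation.ReflTransGen (Rel E) a b}.ncard

/-- The number of connected components of `L` that are directed paths neither
starting in `S` nor ending in `T`.  Such a component is determined by its
initial vertex: a vertex of `L` of in-degree `0`, not in `S`, whose component's
final vertex (the reachable vertex of out-degree `0`) is not in `T`. -/
noncomputable def nMid (E : Finset (V × V)) (S T : Finset V) : ℕ :=
  {a : V | a ∈ VL E ∧ inDeg E a = 0 ∧ a ∉ S ∧
    ∃ b, Relation.ReflTransGen (Rel E) a b ∧ outDeg E b = 0 ∧ b ∉ T}.ncard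

section Aux
variable {E : Finset (V × V)} {a b c : V}

lemma inDeg_zero_iff {v : V} : inDeg E v = 0 ↔ v ∉ E.image Prod.snd := by
  simp only [inDeg, Finset.card_eq_zero, Finset.filter_eq_empty_iff, Finset.mem_image]
  aesop

lemma outDeg_zero_iff {v : V} : outDeg E v = 0 ↔ v ∉ E.image Prod.fst := by
  simp only [outDeg, Finset.card_eq_zero, Finset.filter_eq_empty_iff, Finset.mem_image]
  aesop

lemma rightUnique (hout : ∀ v, outDeg E v ≤ 1) : Relator.RightUnique (Rel E) := by
  intro a b c hb hc
  have h := Finset.card_le_one.mp (hout a) (a, b) ?_ (a, c) ?_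
  · exact congrArg Prod.snd h
  · simpa [Finset.mem_filter, Rel] using hb
  · simpa [Finset.mem_filter, Rel] using hc

lemma reach_no_out (h0 : outDeg E a = 0) (h : Relation.ReflTransGen (Rel E) a b) : b = a := by
  rcases Relation.ReflTransGen.cases_head h with rfl | ⟨c, hc, _⟩
  · rfl
  · exact absurd (by simp only [Finset.mem_image]; exact ⟨(a, c), hc, rfl⟩)
      (outDeg_zero_iff.mp h0)

lemma reach_no_in (h0 : inDeg E a = 0) (h : Relation.ReflTransGen (Rel E) b a) : b = a := by
  rcases Relation.ReflTransGen.cases_tail h with h' | ⟨c, _, hc⟩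
  · exact h'.symm
  · exact absurd (by simp only [Finset.mem_image]; exact ⟨(c, a), hc, rfl⟩)
      (inDeg_zero_iff.mp h0)

lemma end_unique (hout : ∀ v, outDeg E v ≤ 1) (hab : Relation.ReflTransGen (Rel E) a b)
    (hac : Relation.ReflTransGen (Rel E) a c) (hb : outDeg E b = 0) (hc : outDeg E c = 0) :
    b = c := by
  rcases Relation.ReflTransGen.total_of_right_unique (rightUnique hout) hab hac with h | h
  · exact (reach_no_out hb h).symm
  · exact reach_no_out hc h

lemma exists_end : ∀ (E : Finset (V × V)), (∀ v, inDeg E v ≤ 1) → ∀ a, inDeg E a = 0 →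
    ∃ b, Relation.ReflTransGen (Rel E) a b ∧ outDeg E b = 0 := by
  intro E
  induction E using Finset.strongInductionOn with
  | _ E ih =>
    intro hin a ha
    by_cases h0 : outDeg E a = 0
    · exact ⟨a, .refl, h0⟩
    · obtain ⟨e, he⟩ := Finset.card_pos.mp (Nat.pos_of_ne_zero h0)
      simp only [Finset.mem_filter] at he
      obtain ⟨hmem, he1⟩ := he
      set a' := e.2 with ha'
      have hmem : (a, a') ∈ E := by rw [← he1]; exact hmem
      set E' := E.erase (a, a') with hE'
      have hsub : E' ⊆ E := Finset.erase_subset _ _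
      have hinle : ∀ v, inDeg E' v ≤ inDeg E v := fun v =>
        Finset.card_le_card (Finset.filter_subset_filter _ hsub)
      have hfa' : E.filter (fun e => e.2 = a') = {(a, a')} := by
        apply Finset.eq_singleton_iff_unique_mem.mpr
        refine ⟨by simp [hmem], fun x hx => ?_⟩
        exact Finset.card_le_one.mp (hin a') x hx (a, a') (by simp [hmem])
      have hin'a' : inDeg E' a' = 0 := by
        simp only [inDeg, hE', Finset.filter_erase, hfa']
        simp
      obtain ⟨b, hr, hb⟩ := ih E' (Finset.erase_ssubset hmem) (fun v => le_trans (hinle v) (hin v)) a' hin'a'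
      have hba : b ≠ a := by
        rintro rfl
        have haa : a' = b := reach_no_in (Nat.le_zero.mp (ha ▸ hinle b)) hr
        have hmm : (b, a') ∈ E.filter (fun e => e.2 = b) := Finset.mem_filter.mpr ⟨hmem, haa⟩
        have hpos := Finset.card_pos.mpr ⟨_, hmm⟩
        simp only [inDeg] at ha
        omega
      have houtb : outDeg E b = 0 := by
        simp only [outDeg, Finset.card_eq_zero, Finset.filter_eq_empty_iff]
        intro x hx h1
        by_cases hxe : x = (a, a')
        · exact hba (by rw [← h1, hxe])
        · have : x ∈ E'.filter (fun e => e.1 = b) := by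
            simp [hE', Finset.mem_filter, Finset.mem_erase, hxe, hx, h1]
          simp only [outDeg, Finset.card_eq_zero] at hb
          rw [hb] at this
          exact absurd this (Finset.notMem_empty x)
      exact ⟨b, .head hmem (Relation.ReflTransGen.mono (p := Rel E) (fun u v h => hsub h) _ _ hr), houtb⟩

lemma leftUnique (hin : ∀ v, inDeg E v ≤ 1) : ∀ {a b c : V}, Rel E b a → Rel E c a → b = c := by
  intro a b c hb hc
  have h := Finset.card_le_one.mp (hin a) (b, a) ?_ (c, a) ?_
  · exact congrArg Prod.fst h
  · simpa [Finset.mem_filter, Rel] using hb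
  · simpa [Finset.mem_filter, Rel] using hc

lemma inDeg_swap (v : V) : inDeg (E.image Prod.swap) v = outDeg E v := by
  rw [inDeg, outDeg, Finset.filter_image, Finset.card_image_of_injective _ Prod.swap_injective]
  rfl

lemma outDeg_swap (v : V) : outDeg (E.image Prod.swap) v = inDeg E v := by
  rw [outDeg, inDeg, Finset.filter_image, Finset.card_image_of_injective _ Prod.swap_injective]
  rfl

lemma rel_swap {a b : V} : Rel (E.image Prod.swap) a b ↔ Rel E b a := by
  simp only [Rel, Finset.mem_image, Prod.ext_iff]
  constructor
  · rintro ⟨⟨x, y⟩, hxy, h1, h2⟩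
    simp only [Prod.swap] at h1 h2
    simpa [← h1, ← h2] using hxy
  · intro h
    exact ⟨(b, a), h, rfl, rfl⟩

lemma exists_start (hout : ∀ v, outDeg E v ≤ 1) {b : V} (hb : outDeg E b = 0) :
    ∃ a, inDeg E a = 0 ∧ Relation.ReflTransGen (Rel E) a b := by
  obtain ⟨c, hr, hc⟩ := exists_end (E.image Prod.swap)
    (fun v => (inDeg_swap v).le.trans (hout v)) b (by rw [inDeg_swap]; exact hb)
  refine ⟨c, by rwa [outDeg_swap] at hc, ?_⟩
  have : Relation.ReflTransGen (Function.swap (Rel E)) b c :=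
    Relation.ReflTransGen.mono (p := Function.swap (Rel E)) (fun u v h => rel_swap.mp h) _ _ hr
  exact Relation.reflTransGen_swap.mp this

lemma card_filter_split (s : Finset V) (p q : V → Prop) [DecidablePred p] [DecidablePred q] :
    (s.filter p).card
      = (s.filter fun a => p a ∧ q a).card + (s.filter fun a => p a ∧ ¬ q a).card := by
  rw [← Finset.filter_filter, ← Finset.filter_filter,
    Finset.card_filter_add_card_filter_not]

end Aux

/-- Counting the `S`–`T` path components of a linearish arborescence `L` (a
digraph with all in- and out-degrees at most `1`) whose vertices lie in
`S ∪ V° ∪ T`, with no edge entering `S` and no edge leaving `T`: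
`|L_ST| = |E(L)| + |V° \ V(L)| - |V°| + |L_mid|`. -/
theorem count_ST_components (E : Finset (V × V)) (S Vm T : Finset V)
    (hin : ∀ v, inDeg E v ≤ 1) (hout : ∀ v, outDeg E v ≤ 1)
    (hSV : Disjoint S Vm) (hST : Disjoint S T) (hVT : Disjoint Vm T)
    (hvert : ∀ e ∈ E, e.1 ∈ S ∪ Vm ∪ T ∧ e.2 ∈ S ∪ Vm ∪ T)
    (hS : ∀ e ∈ E, e.2 ∉ S) (hT : ∀ e ∈ E, e.1 ∉ T) :
    (nST E S T : ℤ) =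
      (E.card : ℤ) + ((Vm \ VL E).card : ℤ) - (Vm.card : ℤ)
        + (nMid E S T : ℤ) := by
  classical
  -- the "end of path" function
  have hex : ∀ a : V, ∃ b, inDeg E a = 0 →
      Relation.ReflTransGen (Rel E) a b ∧ outDeg E b = 0 := by
    intro a
    by_cases h : inDeg E a = 0
    · obtain ⟨b, h1, h2⟩ := exists_end E hin a h
      exact ⟨b, fun _ => ⟨h1, h2⟩⟩
    · exact ⟨a, fun h' => absurd h' h⟩
  choose f hf using hex
  set Afst := E.image Prod.fst with hAfst
  set Asnd := E.image Prod.snd with hAsnd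
  set A := Afst \ Asnd with hA
  set B := Asnd \ Afst with hB
  -- basic membership facts
  have memAfst : ∀ {a : V}, a ∈ Afst ↔ outDeg E a ≠ 0 := by
    intro a; rw [ne_eq, outDeg_zero_iff, not_not]
  have memAsnd : ∀ {a : V}, a ∈ Asnd ↔ inDeg E a ≠ 0 := by
    intro a; rw [ne_eq, inDeg_zero_iff, not_not]
  have hSnotin : ∀ {a : V}, a ∈ S → a ∉ Asnd := by
    intro a haS hmem
    obtain ⟨e, he, h2⟩ := Finset.mem_image.mp hmem
    exact hS e he (h2 ▸ haS)
  have hTnotin : ∀ {a : V}, a ∈ T → a ∉ Afst := by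
    intro a haT hmem
    obtain ⟨e, he, h2⟩ := Finset.mem_image.mp hmem
    exact hT e he (h2 ▸ haT)
  -- cardinalities
  have hcfst : Afst.card = E.card := by
    apply Finset.card_image_of_injOn
    intro e1 h1 e2 h2 h
    have h2' : Rel E e1.1 e2.2 := by
      show (e1.1, e2.2) ∈ E; rw [h]; simpa using h2
    have := rightUnique hout (show Rel E e1.1 e1.2 by simpa [Rel] using h1) h2'
    exact Prod.ext h this
  have hcsnd : Asnd.card = E.card := by
    apply Finset.card_image_of_injOn
    intro e1 h1 e2 h2 h
    have h2' : Rel E e2.1 e1.2 := by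
      show (e2.1, e1.2) ∈ E; rw [h]; simpa using h2
    have := leftUnique hin (show Rel E e1.1 e1.2 by simpa [Rel] using h1) h2'
    exact Prod.ext this h
  have hVL1 : (VL E).card = E.card + A.card := by
    have h1 : (Afst \ Asnd).card + Asnd.card = (Afst ∪ Asnd).card :=
      Finset.card_sdiff_add_card Afst Asnd
    rw [VL, ← hAfst, ← hAsnd, hA]; omega
  have hVL2 : (VL E).card = E.card + B.card := by
    have h1 : (Asnd \ Afst).card + Afst.card = (Asnd ∪ Afst).card :=
      Finset.card_sdiff_add_card Asnd Afst
    rw [VL, ← hAfst, ← hAsnd, Finset.union_comm, hB]; omega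
  -- f maps A into B, injectively and surjectively
  have hAin : ∀ {a : V}, a ∈ A → inDeg E a = 0 := fun ha =>
    inDeg_zero_iff.mpr (Finset.mem_sdiff.mp ha).2
  have fB : ∀ a ∈ A, f a ∈ B := by
    intro a ha
    have h1 := hf a (hAin ha)
    have hfa : f a ∉ Afst := outDeg_zero_iff.mp h1.2
    have hane : f a ≠ a := fun h => hfa (by rw [h]; exact (Finset.mem_sdiff.mp ha).1)
    rcases Relation.ReflTransGen.cases_tail h1.1 with h' | ⟨c, _, hc⟩
    · exact absurd h' hane
    · exact Finset.mem_sdiff.mpr ⟨Finset.mem_image.mpr ⟨(c, f a), hc, rfl⟩, hfa⟩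
  have finj : ∀ a1 ∈ A, ∀ a2 ∈ A, f a1 = f a2 → a1 = a2 := by
    intro a1 h1 a2 h2 h
    have r1 := (hf a1 (hAin h1)).1
    have r2 := (hf a2 (hAin h2)).1
    rw [h] at r1
    have s1 : Relation.ReflTransGen (Function.swap (Rel E)) (f a2) a1 :=
      Relation.reflTransGen_swap.mpr r1
    have s2 : Relation.ReflTransGen (Function.swap (Rel E)) (f a2) a2 :=
      Relation.reflTransGen_swap.mpr r2
    have hU : Relator.RightUnique (Function.swap (Rel E)) := fun _ _ _ hb hc =>
      leftUnique hin hb hc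
    rcases Relation.ReflTransGen.total_of_right_unique hU s1 s2 with hr | hr
    · exact (reach_no_in (hAin h1) (Relation.reflTransGen_swap.mp hr)).symm
    · exact reach_no_in (hAin h2) (Relation.reflTransGen_swap.mp hr)
  have fsurj : ∀ b ∈ B, ∃ a ∈ A, f a = b := by
    intro b hb
    obtain ⟨hbs, hbf⟩ := Finset.mem_sdiff.mp hb
    obtain ⟨a, ha0, har⟩ := exists_start hout (outDeg_zero_iff.mpr hbf)
    have hane : a ≠ b := fun h => (inDeg_zero_iff.mp ha0) (h ▸ hbs)
    have haA : a ∈ A := by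
      rcases Relation.ReflTransGen.cases_head har with h' | ⟨c, hc, _⟩
      · exact absurd h' hane
      · exact Finset.mem_sdiff.mpr ⟨Finset.mem_image.mpr ⟨(a, c), hc, rfl⟩,
          inDeg_zero_iff.mp ha0⟩
    exact ⟨a, haA, end_unique hout (hf a ha0).1 har (hf a ha0).2
      (outDeg_zero_iff.mpr hbf)⟩
  -- identify the two noncomputable sets with filters on A
  have hSTset : nST E S T = (A.filter fun a => a ∈ S ∧ f a ∈ T).card := by
    rw [nST, ← Set.ncard_coe_finset]
    congr 1
    ext a
    simp only [Set.mem_setOf_eq, Finset.coe_filter, Finset.mem_filter]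
    constructor
    · rintro ⟨haS, b, hbT, hr⟩
      have hb0 : outDeg E b = 0 := outDeg_zero_iff.mpr (hTnotin hbT)
      have ha0 : inDeg E a = 0 := inDeg_zero_iff.mpr (hSnotin haS)
      have hane : a ≠ b := fun h => Finset.disjoint_left.mp hST haS (h ▸ hbT)
      have haA : a ∈ A := by
        rcases Relation.ReflTransGen.cases_head hr with h' | ⟨c, hc, _⟩
        · exact absurd h' hane
        · exact Finset.mem_sdiff.mpr ⟨Finset.mem_image.mpr ⟨(a, c), hc, rfl⟩,
            inDeg_zero_iff.mp ha0⟩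
      have : f a = b := end_unique hout (hf a ha0).1 hr (hf a ha0).2 hb0
      exact ⟨haA, haS, this ▸ hbT⟩
    · rintro ⟨haA, haS, hfT⟩
      exact ⟨haS, f a, hfT, (hf a (hAin haA)).1⟩
  have hMidset : nMid E S T = (A.filter fun a => a ∉ S ∧ f a ∉ T).card := by
    rw [nMid, ← Set.ncard_coe_finset]
    congr 1
    ext a
    simp only [Set.mem_setOf_eq, Finset.coe_filter, Finset.mem_filter]
    constructor
    · rintro ⟨haVL, ha0, haS, b, hr, hb0, hbT⟩
      have haA : a ∈ A := by
        refine Finset.mem_sdiff.mpr ⟨?_, inDeg_zero_iff.mp ha0⟩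
        rcases Finset.mem_union.mp haVL with h | h
        · exact h
        · exact absurd h (inDeg_zero_iff.mp ha0)
      have : f a = b := end_unique hout (hf a ha0).1 hr (hf a ha0).2 hb0
      exact ⟨haA, haS, this ▸ hbT⟩
    · rintro ⟨haA, haS, hfT⟩
      have ha0 := hAin haA
      refine ⟨Finset.mem_union.mpr (Or.inl (Finset.mem_sdiff.mp haA).1), ha0, haS,
        f a, (hf a ha0).1, (hf a ha0).2, hfT⟩
  -- S ∩ VL and T ∩ VL
  have hScap : S ∩ VL E = A.filter (· ∈ S) := by
    ext a
    simp only [Finset.mem_inter, Finset.mem_filter]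
    constructor
    · rintro ⟨haS, haVL⟩
      refine ⟨Finset.mem_sdiff.mpr ⟨?_, hSnotin haS⟩, haS⟩
      rcases Finset.mem_union.mp haVL with h | h
      · exact h
      · exact absurd h (hSnotin haS)
    · rintro ⟨haA, haS⟩
      exact ⟨haS, Finset.mem_union.mpr (Or.inl (Finset.mem_sdiff.mp haA).1)⟩
  have hTcap : T ∩ VL E = B.filter (· ∈ T) := by
    ext a
    simp only [Finset.mem_inter, Finset.mem_filter]
    constructor
    · rintro ⟨haT, haVL⟩
      refine ⟨Finset.mem_sdiff.mpr ⟨?_, hTnotin haT⟩, haT⟩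
      rcases Finset.mem_union.mp haVL with h | h
      · exact absurd h (hTnotin haT)
      · exact h
    · rintro ⟨haB, haT⟩
      exact ⟨haT, Finset.mem_union.mpr (Or.inr (Finset.mem_sdiff.mp haB).1)⟩
  -- bijection transports the count of ends in T
  have hcardT : (A.filter fun a => f a ∈ T).card = (B.filter (· ∈ T)).card := by
    apply Finset.card_bij (fun a _ => f a)
    · intro a ha
      rw [Finset.mem_filter] at ha ⊢
      exact ⟨fB a ha.1, ha.2⟩
    · intro a1 h1 a2 h2 h
      exact finj a1 (Finset.mem_filter.mp h1).1 a2 (Finset.mem_filter.mp h2).1 h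
    · intro b hb
      rw [Finset.mem_filter] at hb
      obtain ⟨a, haA, rfl⟩ := fsurj b hb.1
      exact ⟨a, Finset.mem_filter.mpr ⟨haA, hb.2⟩, rfl⟩
  -- partition of VL by S, Vm, T
  have hVLsub : ∀ v ∈ VL E, v ∈ S ∪ Vm ∪ T := by
    intro v hv
    rcases Finset.mem_union.mp hv with h | h <;>
      obtain ⟨e, he, h2⟩ := Finset.mem_image.mp h
    · exact h2 ▸ (hvert e he).1
    · exact h2 ▸ (hvert e he).2
  have hpart : (VL E).card
      = (S ∩ VL E).card + (Vm ∩ VL E).card + (T ∩ VL E).card := by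
    have hd1 : Disjoint (S ∩ VL E) (Vm ∩ VL E) :=
      hSV.mono Finset.inter_subset_left Finset.inter_subset_left
    have hd2 : Disjoint (S ∩ VL E ∪ Vm ∩ VL E) (T ∩ VL E) :=
      Finset.disjoint_union_left.mpr
        ⟨hST.mono Finset.inter_subset_left Finset.inter_subset_left,
         hVT.mono Finset.inter_subset_left Finset.inter_subset_left⟩
    have heq : S ∩ VL E ∪ Vm ∩ VL E ∪ T ∩ VL E = VL E := by
      ext v
      simp only [Finset.mem_union, Finset.mem_inter]
      constructor
      · rintro ((⟨_, h⟩ | ⟨_, h⟩) | ⟨_, h⟩) <;> exact h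
      · intro hv
        rcases Finset.mem_union.mp (hVLsub v hv) with h | h
        · rcases Finset.mem_union.mp h with h | h
          · exact Or.inl (Or.inl ⟨h, hv⟩)
          · exact Or.inl (Or.inr ⟨h, hv⟩)
        · exact Or.inr ⟨h, hv⟩
    have hcu := Finset.card_union_of_disjoint hd2
    rw [Finset.card_union_of_disjoint hd1, heq] at hcu
    omega
  have hVm : (Vm ∩ VL E).card + (Vm \ VL E).card = Vm.card :=
    Finset.card_inter_add_card_sdiff Vm (VL E)
  -- four-way split of A
  have s0 := Finset.card_filter_add_card_filter_not
    (s := A) (p := fun a => a ∈ S)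
  have s1 := card_filter_split A (fun a => a ∈ S) (fun a => f a ∈ T)
  have s2 := card_filter_split A (fun a => ¬ a ∈ S) (fun a => f a ∈ T)
  have s3 := card_filter_split A (fun a => f a ∈ T) (fun a => a ∈ S)
  have e1 : (A.filter fun a => f a ∈ T ∧ a ∈ S)
      = A.filter fun a => a ∈ S ∧ f a ∈ T :=
    Finset.filter_congr (fun x _ => by tauto)
  have e2 : (A.filter fun a => f a ∈ T ∧ ¬ a ∈ S)
      = A.filter fun a => ¬ a ∈ S ∧ f a ∈ T :=
    Finset.filter_congr (fun x _ => by tauto)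
  have e3 : (A.filter fun a => ¬ a ∈ S ∧ ¬ f a ∈ T)
      = A.filter fun a => a ∉ S ∧ f a ∉ T := rfl
  rw [e1, e2] at s3
  rw [e3] at s2
  -- assemble
  rw [hSTset, hMidset]
  have hSc : (S ∩ VL E).card = (A.filter (· ∈ S)).card := by rw [hScap]
  have hTc : (T ∩ VL E).card = (B.filter (· ∈ T)).card := by rw [hTcap]
  omega

end LinearishArborescence
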